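/- Let Δ_ℛ : 𝒫(𝒫(X))^n → 𝒫(𝒫(Y)) be a Kripke operator (X, Y finite) that weakly preserves dominated convexity, i.e., whenever each 𝒜_i is dominated and convex, Δ_ℛ(𝒜_0,…,𝒜_{n−1}) is either empty or dominated and convex. Then DD(Δ_ℛ(𝒜_0,…,𝒜_{n−1})) ≤ DD(𝒜_0) · … · DD(𝒜_{n−1}) for all families 𝒜_0,…,𝒜_{n−1}. -/
import Mathlib


open Set

/-- A family of sets is convex if it is closed under set-theoretic betweenness. -/
def IsConvexFam {X : Type*} (𝒜 : Set (Set X)) : Prop :=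
  ∀ S ∈ 𝒜, ∀ T ∈ 𝒜, ∀ C : Set X, S ⊆ C → C ⊆ T → C ∈ 𝒜

/-- A family is dominated if its union belongs to it. -/
def IsDominatedFam {X : Type*} (𝒜 : Set (Set X)) : Prop := ⋃₀ 𝒜 ∈ 𝒜

/-- A family is supported if it is nonempty and its intersection belongs to it. -/
def IsSupportedFam {X : Type*} (𝒜 : Set (Set X)) : Prop := 𝒜.Nonempty ∧ ⋂₀ 𝒜 ∈ 𝒜

/-- A family is an interval if it equals `[A,B] = {C | A ⊆ C ⊆ B}` for some `A ⊆ B`. -/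
def IsIntervalFam {X : Type*} (𝒜 : Set (Set X)) : Prop :=
  ∃ A B : Set X, A ⊆ B ∧ 𝒜 = Set.Icc A B

/-- `𝒢` dominates `𝒜` if there are dominated convex families `𝒟 G ⊆ 𝒜` (`G ∈ 𝒢`)
with `⋃ G ∈ 𝒢, 𝒟 G = 𝒜` and `⋃₀ (𝒟 G) = G`. -/
def DominatesFam {X : Type*} (𝒢 𝒜 : Set (Set X)) : Prop :=
  𝒢 ⊆ 𝒜 ∧ ∃ 𝒟 : Set X → Set (Set X),
    (∀ G ∈ 𝒢, 𝒟 G ⊆ 𝒜 ∧ IsConvexFam (𝒟 G) ∧ IsDominatedFam (𝒟 G) ∧ ⋃₀ (𝒟 G) = G) ∧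
    (⋃ G ∈ 𝒢, 𝒟 G) = 𝒜

/-- `𝒦` supports `𝒜` if there are supported convex families `𝒮 K ⊆ 𝒜` (`K ∈ 𝒦`)
with `⋃ K ∈ 𝒦, 𝒮 K = 𝒜` and `⋂₀ (𝒮 K) = K`. -/
def SupportsFam {X : Type*} (𝒦 𝒜 : Set (Set X)) : Prop :=
  𝒦 ⊆ 𝒜 ∧ ∃ 𝒮 : Set X → Set (Set X),
    (∀ K ∈ 𝒦, 𝒮 K ⊆ 𝒜 ∧ IsConvexFam (𝒮 K) ∧ IsSupportedFam (𝒮 K) ∧ ⋂₀ (𝒮 K) = K) ∧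
    (⋃ K ∈ 𝒦, 𝒮 K) = 𝒜

/-- The upper dimension: the minimal cardinality of a dominating subfamily. -/
noncomputable def upperDim {X : Type*} (𝒜 : Set (Set X)) : ℕ∞ :=
  sInf {n : ℕ∞ | ∃ 𝒢 : Set (Set X), DominatesFam 𝒢 𝒜 ∧ 𝒢.encard = n}

/-- The dual upper dimension: the minimal cardinality of a supporting subfamily. -/
noncomputable def dualDim {X : Type*} (𝒜 : Set (Set X)) : ℕ∞ :=
  sInf {n : ℕ∞ | ∃ 𝒦 : Set (Set X), SupportsFam 𝒦 𝒜 ∧ 𝒦.encard = n}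

/-- The cylindrical dimension: the minimal number of intervals whose union is `𝒜`. -/
noncomputable def cylDim {X : Type*} (𝒜 : Set (Set X)) : ℕ∞ :=
  sInf {n : ℕ∞ | ∃ 𝕀 : Set (Set (Set X)),
    (∀ J ∈ 𝕀, IsIntervalFam J) ∧ ⋃₀ 𝕀 = 𝒜 ∧ 𝕀.encard = n}

open Classical in
noncomputable def chiFun {X : Type*} (A : Set X) (x : X) : Bool := decide (x ∈ A)

/-- The set-theoretic operation corresponding to a binary operation on `{0,1}`. -/
noncomputable def setOp {X : Type*} (op : Bool → Bool → Bool) (A B : Set X) : Set X :=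
  {x | op (chiFun A x) (chiFun B x) = true}

/-- The tensor operation on families corresponding to a binary operation on `{0,1}`. -/
noncomputable def tensorFam {X : Type*} (op : Bool → Bool → Bool)
    (𝒜 ℬ : Set (Set X)) : Set (Set X) :=
  Set.image2 (setOp op) 𝒜 ℬ

/-- The convex shadow of `A` in `𝒜`. -/
def convexShadow {X : Type*} (𝒜 : Set (Set X)) (A : Set X) : Set (Set X) :=
  {B | B ⊆ A ∧ Set.Icc B A ⊆ 𝒜}

/-- Domain of a relation. -/
def relDom {X Y : Type*} (R : Set (X × Y)) : Set X := {x | ∃ y, (x, y) ∈ R}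

/-- Range of a relation. -/
def relRg {X Y : Type*} (R : Set (X × Y)) : Set Y := {y | ∃ x, (x, y) ∈ R}

/-- The family of (partial) functions from `X` to `Y`, as sets of pairs. -/
def partialFunFam (X Y : Type*) : Set (Set (X × Y)) :=
  {f | ∀ x y y', (x, y) ∈ f → (x, y') ∈ f → y = y'}

/-- The family of relations on `X` with disjoint domain and range. -/
def exclFam (X : Type*) : Set (Set (X × X)) :=
  {R | relDom R ∩ relRg R = ∅}

/-- The family of relations on `X` whose domain is included in their range. -/
def inclFam (X : Type*) : Set (Set (X × X)) :=
  {R | relDom R ⊆ relRg R}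

/-- The family of anonymous relations: every point of the domain has two distinct images. -/
def anonFam (X Y : Type*) : Set (Set (X × Y)) :=
  {R | ∀ x ∈ relDom R, ∃ y y' : Y, y ≠ y' ∧ (x, y) ∈ R ∧ (x, y') ∈ R}

/-- The family of rectangles `A × B`. -/
def rectFam (X Y : Type*) : Set (Set (X × Y)) :=
  {P | ∃ (A : Set X) (B : Set Y), P = A ×ˢ B}

/-- General tensor disjunction of an indexed family of families of sets. -/
def gTensorDisj {ι X : Type*} (𝒜 : ι → Set (Set X)) : Set (Set X) :=
  {U | ∃ f : ι → Set X, (∀ i, f i ∈ 𝒜 i) ∧ U = ⋃ i, f i}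

/-- The Kripke operator associated to a relation `ℛ ⊆ 𝒫(Y) × 𝒫(X)^n`. -/
def kripkeOp {X Y : Type*} {n : ℕ} (ℛ : Set (Set Y × (Fin n → Set X)))
    (𝒜 : Fin n → Set (Set X)) : Set (Set Y) :=
  {B | ∃ A : Fin n → Set X, (∀ i, A i ∈ 𝒜 i) ∧ (B, A) ∈ ℛ}


/-- If `𝒜` is covered by an indexed collection of families, each empty or dominated+convex,
then `upperDim 𝒜` is at most the cardinality of the index type. -/
lemma my_cover_bound {X : Type*} {ι : Type*} (𝒜 : Set (Set X)) (𝒞 : ι → Set (Set X))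
    (hdc : ∀ j, 𝒞 j = ∅ ∨ (IsDominatedFam (𝒞 j) ∧ IsConvexFam (𝒞 j)))
    (hun : (⋃ j, 𝒞 j) = 𝒜) :
    upperDim 𝒜 ≤ (Set.univ : Set ι).encard := by
  classical
  have hsub : ∀ j, 𝒞 j ⊆ 𝒜 := fun j => hun ▸ Set.subset_iUnion 𝒞 j
  have hdomconv : ∀ j, (𝒞 j).Nonempty → IsDominatedFam (𝒞 j) ∧ IsConvexFam (𝒞 j) := by
    intro j hj
    rcases hdc j with h | h
    · exact absurd h (Set.nonempty_iff_ne_empty.mp hj)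
    · exact h
  set 𝒢 : Set (Set X) := {G | ∃ j, (𝒞 j).Nonempty ∧ ⋃₀ 𝒞 j = G} with h𝒢
  set 𝒟 : Set X → Set (Set X) := fun G => {S | ∃ j, S ∈ 𝒞 j ∧ ⋃₀ 𝒞 j = G} with h𝒟
  have hGA : 𝒢 ⊆ 𝒜 := by
    rintro G ⟨j, hj, rfl⟩
    exact hsub j (hdomconv j hj).1
  have hdom : DominatesFam 𝒢 𝒜 := by
    refine ⟨hGA, 𝒟, ?_, ?_⟩
    · rintro G ⟨j₀, hj₀, hGj₀⟩
      have hDsub : 𝒟 G ⊆ 𝒜 := by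
        rintro S ⟨j, hS, _⟩; exact hsub j hS
      have hGmem : G ∈ 𝒟 G := ⟨j₀, hGj₀ ▸ (hdomconv j₀ hj₀).1, hGj₀⟩
      have hsUnion : ⋃₀ 𝒟 G = G := by
        apply Set.Subset.antisymm
        · rintro x ⟨S, ⟨j, hS, hGj⟩, hxS⟩
          exact hGj ▸ ⟨S, hS, hxS⟩
        · exact Set.subset_sUnion_of_mem hGmem
      refine ⟨hDsub, ?_, ?_, hsUnion⟩
      · rintro S ⟨j, hSj, hGj⟩ T ⟨k, hTk, hGk⟩ C hSC hCT
        have hjne : (𝒞 j).Nonempty := ⟨S, hSj⟩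
        have hGinj : G ∈ 𝒞 j := hGj ▸ (hdomconv j hjne).1
        have hCG : C ⊆ G := hCT.trans (hGk ▸ Set.subset_sUnion_of_mem hTk)
        exact ⟨j, (hdomconv j hjne).2 S hSj G hGinj C hSC hCG, hGj⟩
      · show ⋃₀ 𝒟 G ∈ 𝒟 G
        rw [hsUnion]; exact hGmem
    · apply Set.Subset.antisymm
      · rintro A hA
        simp only [Set.mem_iUnion] at hA
        obtain ⟨G, hG, j, hAj, _⟩ := hA
        exact hsub j hAj
      · intro A hA
        rw [← hun] at hA
        obtain ⟨_, ⟨j, rfl⟩, hAj⟩ := hA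
        refine Set.mem_iUnion₂.mpr ⟨⋃₀ 𝒞 j, ⟨j, ⟨A, hAj⟩, rfl⟩, ⟨j, hAj, rfl⟩⟩
  have hcard : 𝒢.encard ≤ (Set.univ : Set ι).encard := by
    have h1 : 𝒢 ⊆ (fun j => ⋃₀ 𝒞 j) '' Set.univ := by
      rintro G ⟨j, _, hGj⟩
      exact ⟨j, trivial, hGj⟩
    exact (Set.encard_mono h1).trans (Set.encard_image_le _ _)
  exact le_trans (sInf_le ⟨𝒢, hdom, rfl⟩) hcard

/-- The minimum in `upperDim` is attained. -/
lemma my_exists_min_dominating {X : Type*} [Finite X] (𝒜 : Set (Set X)) :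
    ∃ 𝒢 : Set (Set X), DominatesFam 𝒢 𝒜 ∧ 𝒢.encard = upperDim 𝒜 := by
  have hne : {n : ℕ∞ | ∃ 𝒢 : Set (Set X), DominatesFam 𝒢 𝒜 ∧ 𝒢.encard = n}.Nonempty := by
    refine ⟨𝒜.encard, 𝒜, ⟨Set.Subset.rfl, fun A => {A}, ?_, ?_⟩, rfl⟩
    · intro A hA
      refine ⟨Set.singleton_subset_iff.mpr hA, ?_, ?_, Set.sUnion_singleton A⟩
      · rintro S hS T hT C hSC hCT
        rw [Set.mem_singleton_iff] at hS hT
        subst hS; subst hT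
        exact Set.mem_singleton_iff.mpr (Set.Subset.antisymm hCT hSC)
      · show ⋃₀ {A} ∈ ({A} : Set (Set X))
        rw [Set.sUnion_singleton]; rfl
    · simp
  have := csInf_mem hne
  obtain ⟨𝒢, h1, h2⟩ := this
  exact ⟨𝒢, h1, h2⟩


theorem stmt19 {X Y : Type*} [Finite X] [Finite Y] {n : ℕ}
    (ℛ : Set (Set Y × (Fin n → Set X)))
    (hpres : ∀ 𝒜 : Fin n → Set (Set X),
      (∀ i, IsDominatedFam (𝒜 i) ∧ IsConvexFam (𝒜 i)) →
      kripkeOp ℛ 𝒜 = ∅ ∨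
        (IsDominatedFam (kripkeOp ℛ 𝒜) ∧ IsConvexFam (kripkeOp ℛ 𝒜)))
    (𝒜 : Fin n → Set (Set X)) :
    upperDim (kripkeOp ℛ 𝒜) ≤ ∏ i, upperDim (𝒜 i) := by
  classical
  choose 𝒢 hG hcard using fun i => my_exists_min_dominating (𝒜 i)
  choose 𝒟 hD hDun using fun i => (hG i).2
  set ι := ∀ i : Fin n, ↥(𝒢 i) with hι
  set 𝒞 : ι → Set (Set Y) := fun g => kripkeOp ℛ (fun i => 𝒟 i ((g i) : Set X)) with h𝒞
  have hdc : ∀ g : ι, 𝒞 g = ∅ ∨ (IsDominatedFam (𝒞 g) ∧ IsConvexFam (𝒞 g)) := by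
    intro g
    apply hpres
    intro i
    obtain ⟨_, hconv, hdom, _⟩ := hD i (g i) (g i).2
    exact ⟨hdom, hconv⟩
  have hun : (⋃ g, 𝒞 g) = kripkeOp ℛ 𝒜 := by
    apply Set.Subset.antisymm
    · rintro B hB
      simp only [Set.mem_iUnion] at hB
      obtain ⟨g, A, hA, hBA⟩ := hB
      exact ⟨A, fun i => (hD i (g i) (g i).2).1 (hA i), hBA⟩
    · rintro B ⟨A, hA, hBA⟩
      have : ∀ i, ∃ G : ↥(𝒢 i), A i ∈ 𝒟 i (G : Set X) := by
        intro i
        have := hA i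
        rw [← hDun i] at this
        obtain ⟨_, ⟨G, rfl⟩, h⟩ := this
        simp only [Set.mem_iUnion] at h
        obtain ⟨hG', hmem⟩ := h
        exact ⟨⟨G, hG'⟩, hmem⟩
      choose g hg using this
      exact Set.mem_iUnion.mpr ⟨g, A, hg, hBA⟩
  have h1 := my_cover_bound (kripkeOp ℛ 𝒜) 𝒞 hdc hun
  refine h1.trans ?_
  have : (Set.univ : Set ι).encard = ∏ i, upperDim (𝒜 i) := by
    rw [Set.encard_univ, ENat.card_eq_coe_natCard, Nat.card_pi, Nat.cast_prod]
    exact Finset.prod_congr rfl fun i _ => by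
      rw [← hcard i, show (𝒢 i).encard = ENat.card ↥(𝒢 i) from rfl,
        ENat.card_eq_coe_natCard]
  exact this.le
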